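/- For λ ∈ Γ_k, the sum Σ_{i=1}^n ∂(σ_k^{1/k})/∂λ_i is at least C(n,k)^{1/k}, where C(n,k) is the binomial coefficient. -/

import Mathlib

open Finset

noncomputable def esym {n : ℕ} (k : ℕ) (lam : Fin n → ℝ) : ℝ :=
  ∑ s ∈ Finset.univ.powersetCard k, ∏ i ∈ s, lam i

noncomputable def esym1 {n : ℕ} (k : ℕ) (lam : Fin n → ℝ) (i : Fin n) : ℝ :=
  ∑ s ∈ (Finset.univ.erase i).powersetCard k, ∏ j ∈ s, lam j

noncomputable def esym2 {n : ℕ} (k : ℕ) (lam : Fin n → ℝ) (i j : Fin n) : ℝ :=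
  ∑ s ∈ ((Finset.univ.erase i).erase j).powersetCard k, ∏ l ∈ s, lam l

def GardingCone (n k : ℕ) : Set (Fin n → ℝ) :=
  {lam | ∀ j : ℕ, 1 ≤ j → j ≤ k → 0 < esym j lam}

-- ============ auxiliary lemmas ============

section Aux
open Polynomial

theorem esym_eq_esymm {n : ℕ} (k : ℕ) (lam : Fin n → ℝ) :
    esym k lam = (Multiset.map lam Finset.univ.val).esymm k := by
  rw [Finset.esymm_map_val]; rfl

theorem esym_zero {n : ℕ} (lam : Fin n → ℝ) : esym 0 lam = 1 := by
  simp [esym]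

theorem sum_erase_powersetCard {ι : Type*} [DecidableEq ι] (u : Finset ι) (m : ℕ)
    (lam : ι → ℝ) :
    ∑ i ∈ u, ∑ s ∈ (u.erase i).powersetCard m, ∏ j ∈ s, lam j
      = ((u.card - m : ℕ) : ℝ) * ∑ s ∈ u.powersetCard m, ∏ j ∈ s, lam j := by
  have h1 : ∀ i, (u.erase i).powersetCard m
      = (u.powersetCard m).filter (fun s => i ∉ s) := by
    intro i
    ext s
    simp only [Finset.mem_powersetCard, Finset.mem_filter, Finset.subset_erase]
    tauto
  calc ∑ i ∈ u, ∑ s ∈ (u.erase i).powersetCard m, ∏ j ∈ s, lam j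
      = ∑ i ∈ u, ∑ s ∈ u.powersetCard m, if i ∉ s then ∏ j ∈ s, lam j else 0 := by
        refine Finset.sum_congr rfl fun i _ => ?_
        rw [h1 i, Finset.sum_filter]
    _ = ∑ s ∈ u.powersetCard m, ∑ i ∈ u, if i ∉ s then ∏ j ∈ s, lam j else 0 :=
        Finset.sum_comm
    _ = ∑ s ∈ u.powersetCard m, ((u.card - m : ℕ) : ℝ) * ∏ j ∈ s, lam j := by
        refine Finset.sum_congr rfl fun s hs => ?_
        rw [← Finset.sum_filter, Finset.sum_const]
        obtain ⟨hsu, hsc⟩ := Finset.mem_powersetCard.mp hs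
        rw [show u.filter (fun i => i ∉ s) = u \ s from (Finset.sdiff_eq_filter u s).symm,
          Finset.card_sdiff_of_subset hsu, hsc, nsmul_eq_mul]
    _ = ((u.card - m : ℕ) : ℝ) * ∑ s ∈ u.powersetCard m, ∏ j ∈ s, lam j := by
        rw [Finset.mul_sum]

theorem esym_top {n : ℕ} (lam : Fin n → ℝ) :
    esym n lam = ∏ j, lam j := by
  have h : Finset.powersetCard n (Finset.univ : Finset (Fin n)) = {Finset.univ} := by
    have := Finset.powersetCard_self (Finset.univ : Finset (Fin n))
    rwa [Finset.card_univ, Fintype.card_fin] at this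
  rw [esym, h, Finset.sum_singleton]

theorem esym_pred {n : ℕ} (lam : Fin n → ℝ) (hn : 1 ≤ n) :
    esym (n-1) lam = ∑ i, ∏ j ∈ Finset.univ.erase i, lam j := by
  have h := sum_erase_powersetCard (Finset.univ : Finset (Fin n)) (n-1) lam
  rw [Finset.card_univ, Fintype.card_fin, show n - (n-1) = 1 by omega, Nat.cast_one,
    one_mul] at h
  rw [esym, ← h]
  refine (Finset.sum_congr rfl fun i _ => ?_).symm
  have hc : (Finset.univ.erase i).card = n - 1 := by
    rw [Finset.card_erase_of_mem (Finset.mem_univ i), Finset.card_univ, Fintype.card_fin]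
  rw [← hc, Finset.powersetCard_self, Finset.sum_singleton]

theorem newton_top {m : ℕ} (lam : Fin (m+2) → ℝ) :
    esym m lam * esym (m+2) lam * (((m+2).choose (m+1) : ℕ) : ℝ)^2 ≤
      esym (m+1) lam ^ 2 * (((m+2).choose m : ℕ) : ℝ) * (((m+2).choose (m+2) : ℕ) : ℝ) := by
  set a : Fin (m+2) → ℝ := fun i => ∏ j ∈ Finset.univ.erase i, lam j with hadef
  have hS : esym (m+1) lam = ∑ i, a i := by
    have := esym_pred lam (by omega)
    rwa [show m + 2 - 1 = m + 1 by omega] at this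
  have hpt : ∀ i j : Fin (m+2), j ∈ Finset.univ.erase i →
      a i * a j = esym (m+2) lam * ∏ l ∈ (Finset.univ.erase i).erase j, lam l := by
    intro i j hj
    have hij : j ≠ i := Finset.ne_of_mem_erase hj
    have h1 : a i = lam j * ∏ l ∈ (Finset.univ.erase i).erase j, lam l :=
      (Finset.mul_prod_erase _ _ hj).symm
    have h2 : a j = lam i * ∏ l ∈ (Finset.univ.erase j).erase i, lam l :=
      (Finset.mul_prod_erase _ _ (Finset.mem_erase.mpr ⟨hij.symm, Finset.mem_univ i⟩)).symm
    have hcomm : (Finset.univ.erase j).erase i = (Finset.univ.erase i).erase j :=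
      Finset.erase_right_comm
    have h3 : esym (m+2) lam = lam i * a i := by
      rw [esym_top, ← Finset.mul_prod_erase _ _ (Finset.mem_univ i)]
    rw [h1, h2, hcomm, h3, h1]
    ring
  have hdd : ∑ i, ∑ j ∈ Finset.univ.erase i, ∏ l ∈ (Finset.univ.erase i).erase j, lam l
      = 2 * esym m lam := by
    have step1 : ∀ i : Fin (m+2),
        ∑ j ∈ Finset.univ.erase i, ∏ l ∈ (Finset.univ.erase i).erase j, lam l
          = ∑ s ∈ (Finset.univ.erase i).powersetCard m, ∏ l ∈ s, lam l := by
      intro i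
      have hcard : (Finset.univ.erase i).card = m + 1 := by
        rw [Finset.card_erase_of_mem (Finset.mem_univ i), Finset.card_univ, Fintype.card_fin]
        omega
      have h := sum_erase_powersetCard (Finset.univ.erase i) m lam
      rw [hcard, show m + 1 - m = 1 by omega, Nat.cast_one, one_mul] at h
      rw [← h]
      refine Finset.sum_congr rfl fun j hj => ?_
      have hc2 : ((Finset.univ.erase i).erase j).card = m := by
        rw [Finset.card_erase_of_mem hj, hcard]
        omega
      have hps := Finset.powersetCard_self ((Finset.univ.erase i).erase j)
      rw [hc2] at hps
      rw [hps, Finset.sum_singleton]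
    rw [Finset.sum_congr rfl fun i _ => step1 i]
    have h := sum_erase_powersetCard (Finset.univ : Finset (Fin (m+2))) m lam
    rw [Finset.card_univ, Fintype.card_fin, show m + 2 - m = 2 by omega] at h
    rw [h, esym]
    norm_num
  have hkey : 2 * (esym (m+2) lam * esym m lam) = (∑ i, a i)^2 - ∑ i, (a i)^2 := by
    have e1 : ∑ i, ∑ j ∈ Finset.univ.erase i, a i * a j
        = esym (m+2) lam * (2 * esym m lam) := by
      rw [Finset.sum_congr rfl fun i _ => Finset.sum_congr rfl (hpt i)]
      simp_rw [← Finset.mul_sum]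
      rw [hdd]
    have e2 : ∑ i : Fin (m+2), ∑ j ∈ Finset.univ.erase i, a i * a j
        = (∑ i, a i)^2 - ∑ i, (a i)^2 := by
      have h4 : ∀ i : Fin (m+2), ∑ j ∈ Finset.univ.erase i, a i * a j
          = a i * ((∑ j, a j) - a i) := by
        intro i
        rw [← Finset.mul_sum, Finset.sum_erase_eq_sub (Finset.mem_univ i)]
      rw [Finset.sum_congr rfl fun i _ => h4 i]
      simp only [mul_sub]
      rw [Finset.sum_sub_distrib, ← Finset.sum_mul]
      simp [pow_two]
    linear_combination e2 - e1
  have hcs : (∑ i, a i)^2 ≤ ((m+2 : ℕ) : ℝ) * ∑ i, (a i)^2 := by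
    have := sq_sum_le_card_mul_sum_sq (s := (Finset.univ : Finset (Fin (m+2)))) (f := a)
    simpa using this
  have hc1 : (((m+2).choose (m+1) : ℕ) : ℝ) = ((m+2 : ℕ) : ℝ) := by
    rw [show m + 1 = m + 2 - 1 by omega, Nat.choose_symm (by omega), Nat.choose_one_right]
  have hc2 : (((m+2).choose m : ℕ) : ℝ) * 2 = ((m+2 : ℕ) : ℝ) * ((m+1 : ℕ) : ℝ) := by
    have hdvd : 2 ∣ (m+2)*(m+1) :=
      mul_comm (m+2) (m+1) ▸ (Nat.even_mul_succ_self (m+1)).two_dvd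
    have hnat : (m+2).choose m * 2 = (m+2) * (m+1) := by
      have h0 : (m+2).choose m = (m+2).choose 2 := by
        rw [← Nat.choose_symm (show 2 ≤ m+2 by omega), show m+2-2 = m by omega]
      rw [h0, Nat.choose_two_right, show m + 2 - 1 = m + 1 by omega, Nat.div_mul_cancel hdvd]
    exact_mod_cast congrArg (fun x : ℕ => (x : ℝ)) hnat
  have hc3 : (((m+2).choose (m+2) : ℕ) : ℝ) = 1 := by
    simp
  rw [hS, hc1, hc3, mul_one]
  push_cast at hcs hc2 ⊢
  nlinarith [hkey, hcs, hc2, sq_nonneg (∑ i, a i),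
    Finset.sum_nonneg (fun i (_ : i ∈ Finset.univ) => sq_nonneg (a i))]

theorem newton_top' {n : ℕ} (lam : Fin n → ℝ) {j : ℕ} (hj : j + 2 = n) :
    esym j lam * esym (j+2) lam * ((n.choose (j+1) : ℕ) : ℝ)^2 ≤
      esym (j+1) lam ^ 2 * ((n.choose j : ℕ) : ℝ) * ((n.choose (j+2) : ℕ) : ℝ) := by
  subst hj
  exact newton_top lam

theorem deriv_multiset_exists (s : Multiset ℝ) (n : ℕ) (hcard : Multiset.card s = n + 1) :
    ∃ t : Multiset ℝ, Multiset.card t = n ∧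
      ∀ i ≤ n, ((n+1 : ℕ) : ℝ) * t.esymm i = ((n + 1 - i : ℕ) : ℝ) * s.esymm i := by
  set P : Polynomial ℝ := (s.map (fun x => X - C x)).prod with hP
  have hmonic : P.Monic :=
    monic_multiset_prod_of_monic _ _ (fun x _ => monic_X_sub_C x)
  have hdeg : P.natDegree = n + 1 := by
    rw [hP, natDegree_multiset_prod_X_sub_C_eq_card, hcard]
  have hroots : P.roots = s := roots_multiset_prod_X_sub_C s
  set t : Multiset ℝ := (derivative P).roots with ht
  have hle1 : n + 1 ≤ Multiset.card t + 1 := by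
    have := P.card_roots_le_derivative
    rwa [hroots, hcard] at this
  have hle2 : Multiset.card t ≤ (derivative P).natDegree := card_roots' _
  have hle3 : (derivative P).natDegree ≤ n := by
    have := natDegree_derivative_le P
    omega
  have hct : Multiset.card t = n := by omega
  have hdeg' : (derivative P).natDegree = n := by omega
  have hlead : (derivative P).leadingCoeff = ((n+1 : ℕ) : ℝ) := by
    have hc : P.coeff (n+1) = 1 := by rw [← hdeg]; exact hmonic.coeff_natDegree
    rw [leadingCoeff, hdeg', coeff_derivative, hc]
    push_cast
    ring
  refine ⟨t, hct, fun i hi => ?_⟩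
  have hk : n - i + 1 = n + 1 - i := by omega
  have c1 : (derivative P).coeff (n - i) = P.coeff (n - i + 1) * ((n - i : ℕ) + 1 : ℝ) :=
    coeff_derivative P (n - i)
  have c2 : P.coeff (n - i + 1) = (-1 : ℝ) ^ i * s.esymm i := by
    have h := Multiset.prod_X_sub_C_coeff s (k := n - i + 1) (by rw [hcard]; omega)
    rw [hcard, show n + 1 - (n - i + 1) = i by omega] at h
    exact h
  have c4 : (derivative P).coeff (n - i)
      = (derivative P).leadingCoeff * (-1 : ℝ) ^ i * t.esymm i := by
    have h := Polynomial.coeff_eq_esymm_roots_of_card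
      (p := derivative P) (by rw [← ht, hct, hdeg']) (k := n - i) (by omega)
    rwa [show (derivative P).natDegree - (n - i) = i by omega] at h
  have hcomb : ((n+1:ℕ):ℝ) * ((-1:ℝ)^i * t.esymm i)
      = (-1:ℝ)^i * s.esymm i * ((n - i : ℕ) + 1 : ℝ) := by
    rw [← hlead]
    calc (derivative P).leadingCoeff * ((-1:ℝ)^i * t.esymm i)
        = (derivative P).coeff (n - i) := by rw [c4]; ring
      _ = P.coeff (n - i + 1) * ((n - i : ℕ) + 1 : ℝ) := c1
      _ = (-1:ℝ)^i * s.esymm i * ((n - i : ℕ) + 1 : ℝ) := by rw [c2]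
  have hsq : ((-1:ℝ)^i) * ((-1:ℝ)^i) = 1 := by
    rw [← pow_add, Even.neg_one_pow ⟨i, rfl⟩]
  have hfin : ((n+1:ℕ):ℝ) * t.esymm i = s.esymm i * ((n - i : ℕ) + 1 : ℝ) := by
    have h5 := congrArg (fun x => ((-1:ℝ)^i) * x) hcomb
    nlinarith [h5, hsq]
  rw [hfin, show ((n + 1 - i : ℕ) : ℝ) = ((n - i : ℕ) + 1 : ℝ) by rw [← hk]; push_cast; ring]
  ring

theorem multiset_exists_fn (s : Multiset ℝ) (n : ℕ) (h : Multiset.card s = n) :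
    ∃ lam : Fin n → ℝ, Multiset.map lam Finset.univ.val = s := by
  subst h
  have hlen := s.length_toList
  refine ⟨fun i => s.toList.get (Fin.cast hlen.symm i), ?_⟩
  rw [Fin.univ_val_map]
  have h3 : List.ofFn (fun i => s.toList.get (Fin.cast hlen.symm i)) = s.toList := by
    have h2 : ∀ (l : List ℝ) (m : ℕ) (hm : m = l.length),
        List.ofFn (fun i : Fin m => l.get (Fin.cast hm i)) = l := by
      intro l m hm
      subst hm
      simp [List.ofFn_get]
    exact h2 s.toList _ hlen.symm
  rw [h3, Multiset.coe_toList]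

theorem choose_deriv (n i : ℕ) : (n+1) * n.choose i = (n+1).choose i * (n + 1 - i) := by
  rw [Nat.add_one_mul_choose_eq, Nat.choose_succ_right_eq]

theorem newton_esymm (n : ℕ) : ∀ (s : Multiset ℝ), Multiset.card s = n → ∀ j : ℕ, j + 2 ≤ n →
    s.esymm j * s.esymm (j+2) * ((n.choose (j+1) : ℕ) : ℝ)^2 ≤
      s.esymm (j+1)^2 * ((n.choose j : ℕ) : ℝ) * ((n.choose (j+2) : ℕ) : ℝ) := by
  induction n with
  | zero => intro s h j hj; omega
  | succ n ih =>
    intro s hcard j hj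
    rcases eq_or_lt_of_le hj with heq | hlt
    · obtain ⟨lam, hmap⟩ := multiset_exists_fn s (n+1) hcard
      have hesymm : ∀ i, s.esymm i = esym i lam := by
        intro i
        rw [← hmap, ← esym_eq_esymm]
      rw [hesymm, hesymm, hesymm]
      exact newton_top' lam heq
    · have hj2 : j + 2 ≤ n := by omega
      obtain ⟨d, rfl⟩ : ∃ d, n = j + 2 + d := ⟨n - (j+2), by omega⟩
      obtain ⟨t, hct, hkey⟩ := deriv_multiset_exists s (j+2+d) hcard
      have ihs := ih t hct j (by omega)
      have e1 := hkey j (by omega)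
      have e2 := hkey (j+1) (by omega)
      have e3 := hkey (j+2) (by omega)
      rw [show j+2+d+1-j = d+3 by omega] at e1
      rw [show j+2+d+1-(j+1) = d+2 by omega] at e2
      rw [show j+2+d+1-(j+2) = d+1 by omega] at e3
      have cgen : ∀ i : ℕ, i ≤ j + 2 →
          ((j+2+d+1 : ℕ) : ℝ) * ((j+2+d).choose i : ℕ)
            = ((j+2+d+1-i : ℕ) : ℝ) * (((j+2+d+1).choose i : ℕ) : ℝ) := by
        intro i hi
        have h := choose_deriv (j+2+d) i
        have h2 := congrArg (Nat.cast (R := ℝ)) h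
        push_cast at h2 ⊢
        linear_combination h2
      have c0 := cgen j (by omega)
      have c1 := cgen (j+1) (by omega)
      have c2 := cgen (j+2) (by omega)
      rw [show j+2+d+1-j = d+3 by omega] at c0
      rw [show j+2+d+1-(j+1) = d+2 by omega] at c1
      rw [show j+2+d+1-(j+2) = d+1 by omega] at c2
      push_cast at ihs e1 e2 e3 c0 c1 c2 ⊢
      set N : ℝ := (j : ℝ) + 2 + (d : ℝ) + 1 with hN
      set A : ℝ := s.esymm j
      set B : ℝ := s.esymm (j+1)
      set D : ℝ := s.esymm (j+2)
      set A' : ℝ := t.esymm j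
      set B' : ℝ := t.esymm (j+1)
      set D' : ℝ := t.esymm (j+2)
      set Cn0 : ℝ := (((j+2+d).choose j : ℕ) : ℝ)
      set Cn1 : ℝ := (((j+2+d).choose (j+1) : ℕ) : ℝ)
      set Cn2 : ℝ := (((j+2+d).choose (j+2) : ℕ) : ℝ)
      set CN0 : ℝ := (((j+2+d+1).choose j : ℕ) : ℝ)
      set CN1 : ℝ := (((j+2+d+1).choose (j+1) : ℕ) : ℝ)
      set CN2 : ℝ := (((j+2+d+1).choose (j+2) : ℕ) : ℝ)
      have hcpos : (0:ℝ) < ((d:ℝ)+3) * ((d:ℝ)+1) * ((d:ℝ)+2)^2 := by positivity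
      have H : N^4 * (A' * D' * Cn1^2) ≤ N^4 * (B'^2 * Cn0 * Cn2) := by
        have hN4 : (0:ℝ) ≤ N^4 := by positivity
        nlinarith [mul_le_mul_of_nonneg_left ihs hN4]
      have L : N^4 * (A' * D' * Cn1^2)
          = (((d:ℝ)+3) * ((d:ℝ)+1) * ((d:ℝ)+2)^2) * (A * D * CN1^2) := by
        linear_combination (N^3 * D' * Cn1^2) * e1 + (((d:ℝ)+3) * A * N^2 * Cn1^2) * e3
          + (((d:ℝ)+3) * ((d:ℝ)+1) * A * D * (N * Cn1 + ((d:ℝ)+2) * CN1)) * c1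
      have R : N^4 * (B'^2 * Cn0 * Cn2)
          = (((d:ℝ)+3) * ((d:ℝ)+1) * ((d:ℝ)+2)^2) * (B^2 * CN0 * CN2) := by
        linear_combination (N^2 * Cn0 * Cn2 * (N * B' + ((d:ℝ)+2) * B)) * e2
          + (((d:ℝ)+2)^2 * B^2 * N * Cn2) * c0
          + (((d:ℝ)+2)^2 * ((d:ℝ)+3) * B^2 * CN0) * c2
      rw [L, R] at H
      exact le_of_mul_le_mul_left H hcpos

theorem newton_esym {n : ℕ} (lam : Fin n → ℝ) (j : ℕ) (hj : j + 2 ≤ n) :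
    esym j lam * esym (j+2) lam * ((n.choose (j+1) : ℕ) : ℝ)^2 ≤
      esym (j+1) lam ^2 * ((n.choose j : ℕ) : ℝ) * ((n.choose (j+2) : ℕ) : ℝ) := by
  have hcard : Multiset.card (Multiset.map lam Finset.univ.val) = n := by
    rw [Multiset.card_map]
    simp
  have h := newton_esymm n (Multiset.map lam Finset.univ.val) hcard j hj
  rwa [← esym_eq_esymm, ← esym_eq_esymm, ← esym_eq_esymm] at h

theorem sum_sum_erase {n m : ℕ} (lam : Fin n → ℝ) :
    ∑ s ∈ Finset.univ.powersetCard (m+1), ∑ j ∈ s, ∏ l ∈ s.erase j, lam l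
      = ((n - m : ℕ) : ℝ) * esym m lam := by
  have hA : ∑ s ∈ Finset.univ.powersetCard (m+1), ∑ j ∈ s, ∏ l ∈ s.erase j, lam l
      = ∑ j : Fin n, ∑ s ∈ (Finset.univ.erase j).powersetCard m, ∏ l ∈ s, lam l := by
    rw [Finset.sum_sigma', Finset.sum_sigma']
    refine Finset.sum_bij' (fun p _ => ⟨p.2, p.1.erase p.2⟩)
      (fun q _ => ⟨insert q.1 q.2, q.1⟩) ?_ ?_ ?_ ?_ ?_
    · intro p hp
      simp only [Finset.mem_sigma, Finset.mem_powersetCard] at hp ⊢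
      obtain ⟨⟨hsub, hcard⟩, hmem⟩ := hp
      refine ⟨Finset.mem_univ _, ?_, ?_⟩
      · exact Finset.erase_subset_erase _ hsub
      · rw [Finset.card_erase_of_mem hmem, hcard]
        omega
    · intro q hq
      simp only [Finset.mem_sigma, Finset.mem_powersetCard] at hq ⊢
      obtain ⟨-, hsub, hcard⟩ := hq
      have hnot : q.1 ∉ q.2 := (Finset.subset_erase.mp hsub).2
      refine ⟨⟨Finset.subset_univ _, ?_⟩, Finset.mem_insert_self _ _⟩
      rw [Finset.card_insert_of_notMem hnot, hcard]
    · intro p hp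
      simp only [Finset.mem_sigma] at hp
      have : insert p.2 (p.1.erase p.2) = p.1 := Finset.insert_erase hp.2
      exact Sigma.ext (by simp [this]) (by simp)
    · intro q hq
      simp only [Finset.mem_sigma, Finset.mem_powersetCard] at hq
      obtain ⟨-, hsub, -⟩ := hq
      have hnot : q.1 ∉ q.2 := (Finset.subset_erase.mp hsub).2
      have : (insert q.1 q.2).erase q.1 = q.2 := Finset.erase_insert hnot
      exact Sigma.ext (by simp) (by simp [this])
    · intro p _
      rfl
  rw [hA]
  have h := sum_erase_powersetCard (Finset.univ : Finset (Fin n)) m lam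
  rw [Finset.card_univ, Fintype.card_fin] at h
  rw [h, esym]

theorem sum_fderiv_esym {n m : ℕ} (lam : Fin n → ℝ)
    (hpos : esym (m+1) lam ≠ 0) (r : ℝ) :
    ∑ i : Fin n, fderiv ℝ (fun μ : Fin n → ℝ => esym (m+1) μ ^ r) lam (Pi.single i 1)
      = r * esym (m+1) lam ^ (r - 1) * (((n - m : ℕ) : ℝ) * esym m lam) := by
  set F' : (Fin n → ℝ) →L[ℝ] ℝ :=
    ∑ s ∈ Finset.univ.powersetCard (m+1), ∑ i ∈ s,
      (∏ j ∈ s.erase i, lam j) • (ContinuousLinearMap.proj i) with hF'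
  have hF : HasFDerivAt (fun μ : Fin n → ℝ => esym (m+1) μ) F' lam := by
    have h1 : HasFDerivAt
        (fun μ : Fin n → ℝ => ∑ s ∈ Finset.univ.powersetCard (m+1), ∏ i ∈ s, μ i) F' lam :=
      HasFDerivAt.fun_sum fun s _ =>
        HasFDerivAt.finset_prod fun i _ =>
          (ContinuousLinearMap.proj (R := ℝ) (φ := fun _ : Fin n => ℝ) i).hasFDerivAt
    exact h1
  have hchain : HasFDerivAt (fun μ : Fin n → ℝ => esym (m+1) μ ^ r)
      ((r * esym (m+1) lam ^ (r - 1)) • F') lam :=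
    (Real.hasDerivAt_rpow_const (p := r) (Or.inl hpos)).comp_hasFDerivAt lam hF
  rw [hchain.fderiv]
  have hFapp : ∑ i, F' (Pi.single i 1) = ((n-m:ℕ):ℝ) * esym m lam := by
    have h1 : ∀ i : Fin n, F' (Pi.single i 1)
        = ∑ s ∈ Finset.univ.powersetCard (m+1), ∑ j ∈ s,
            (∏ l ∈ s.erase j, lam l) * ((Pi.single i 1 : Fin n → ℝ) j) := by
      intro i
      simp [hF', ContinuousLinearMap.sum_apply, ContinuousLinearMap.smul_apply,
        ContinuousLinearMap.proj_apply, smul_eq_mul]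
    rw [Finset.sum_congr rfl fun i _ => h1 i, Finset.sum_comm]
    have h2 : ∀ s ∈ Finset.univ.powersetCard (m+1),
        ∑ i : Fin n, ∑ j ∈ s, (∏ l ∈ s.erase j, lam l) * ((Pi.single i 1 : Fin n → ℝ) j)
          = ∑ j ∈ s, ∏ l ∈ s.erase j, lam l := by
      intro s _
      rw [Finset.sum_comm]
      refine Finset.sum_congr rfl fun j hj => ?_
      rw [← Finset.mul_sum]
      have h3 : ∑ i : Fin n, (Pi.single i 1 : Fin n → ℝ) j = 1 := by
        simp [Pi.single_apply]
      rw [h3, mul_one]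
    rw [Finset.sum_congr rfl h2, sum_sum_erase lam]
  simp only [ContinuousLinearMap.smul_apply, smul_eq_mul]
  rw [← Finset.mul_sum, hFapp]

end Aux

theorem stmt10 {n : ℕ} (k : ℕ) (hk : 1 ≤ k) (hkn : k ≤ n) (lam : Fin n → ℝ)
    (hG : lam ∈ GardingCone n k) :
    ∑ i : Fin n,
        fderiv ℝ (fun μ : Fin n → ℝ => esym k μ ^ ((1 : ℝ) / k)) lam (Pi.single i 1) ≥
      (n.choose k : ℝ) ^ ((1 : ℝ) / k) := by
  obtain ⟨k', rfl⟩ : ∃ k', k = k' + 1 := ⟨k-1, by omega⟩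
  have hek : 0 < esym (k'+1) lam := hG (k'+1) (by omega) le_rfl
  set r : ℝ := (1:ℝ) / ((k'+1 : ℕ) : ℝ) with hr
  have hrpos : 0 < r := by
    rw [hr]
    positivity
  have hS := sum_fderiv_esym (m := k') lam hek.ne' r
  rw [ge_iff_le, hS]
  have hCK : (0:ℝ) < ((n.choose (k'+1) : ℕ) : ℝ) := by exact_mod_cast Nat.choose_pos hkn
  have hCK1 : (0:ℝ) < ((n.choose k' : ℕ) : ℝ) := by
    exact_mod_cast Nat.choose_pos (by omega)
  set p : ℕ → ℝ := fun i => esym i lam / ((n.choose i : ℕ) : ℝ) with hp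
  have hppos : ∀ i, i ≤ k'+1 → 0 < p i := by
    intro i hi
    have hc : (0:ℝ) < ((n.choose i : ℕ) : ℝ) := by
      exact_mod_cast Nat.choose_pos (by omega)
    rcases Nat.eq_zero_or_pos i with h0 | h1
    · subst h0
      rw [hp]
      simp only
      rw [esym_zero]
      positivity
    · exact div_pos (hG i h1 hi) hc
  have hnewt : ∀ j, j + 2 ≤ k'+1 → p j * p (j+2) ≤ p (j+1)^2 := by
    intro j hj
    have h := newton_esym lam j (by omega)
    have c0 : (0:ℝ) < ((n.choose j : ℕ) : ℝ) := by
      exact_mod_cast Nat.choose_pos (by omega)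
    have c1 : (0:ℝ) < ((n.choose (j+1) : ℕ) : ℝ) := by
      exact_mod_cast Nat.choose_pos (by omega)
    have c2 : (0:ℝ) < ((n.choose (j+2) : ℕ) : ℝ) := by
      exact_mod_cast Nat.choose_pos (by omega)
    rw [hp]
    simp only
    rw [div_mul_div_comm, div_pow, div_le_div_iff₀ (by positivity) (by positivity)]
    nlinarith [h]
  have hmac : ∀ j, j + 1 ≤ k'+1 → p (j+1)^j ≤ p j^(j+1) := by
    intro j
    induction j with
    | zero =>
      intro _
      have hp0 : p 0 = 1 := by
        rw [hp]
        simp [esym_zero]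
      simp [hp0]
    | succ j ihj =>
      intro hjk
      have h1 := ihj (by omega)
      have h2 := hnewt j (by omega)
      have q0 := hppos j (by omega)
      have q1 := hppos (j+1) (by omega)
      have q2 := hppos (j+2) (by omega)
      have key : (p j * p (j+2))^(j+1) ≤ (p (j+1)^2)^(j+1) :=
        pow_le_pow_left₀ (by positivity) h2 (j+1)
      have k1 : p (j+1)^j * p (j+2)^(j+1) ≤ p j^(j+1) * p (j+2)^(j+1) :=
        mul_le_mul_of_nonneg_right h1 (by positivity)
      have k2 : p j^(j+1) * p (j+2)^(j+1) = (p j * p (j+2))^(j+1) := (mul_pow _ _ _).symm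
      have k3 : (p (j+1)^2)^(j+1) = p (j+1)^j * p (j+1)^(j+2) := by
        rw [← pow_mul, ← pow_add]
        congr 1
        omega
      have k4 : p (j+1)^j * p (j+2)^(j+1) ≤ p (j+1)^j * p (j+1)^(j+2) := by
        calc p (j+1)^j * p (j+2)^(j+1) ≤ p j^(j+1) * p (j+2)^(j+1) := k1
          _ = (p j * p (j+2))^(j+1) := k2
          _ ≤ (p (j+1)^2)^(j+1) := key
          _ = p (j+1)^j * p (j+1)^(j+2) := k3
      exact le_of_mul_le_mul_left k4 (pow_pos q1 j)
  have hM := hmac k' le_rfl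
  have hpk1 := hppos (k'+1) le_rfl
  have hpk := hppos k' (by omega)
  have hr1 : ((k'+1 : ℕ) : ℝ) * r = 1 := by
    rw [hr]
    have : ((k'+1 : ℕ) : ℝ) ≠ 0 := by positivity
    field_simp
  have hMac : p (k'+1) ^ ((k' : ℝ) * r) ≤ p k' := by
    have h1 : (p (k'+1)^(k' : ℕ)) ^ r ≤ (p k'^(k'+1 : ℕ)) ^ r :=
      Real.rpow_le_rpow (by positivity) hM hrpos.le
    rw [← Real.rpow_natCast (p (k'+1)) k', ← Real.rpow_natCast (p k') (k'+1),
      ← Real.rpow_mul hpk1.le, ← Real.rpow_mul hpk.le, hr1, Real.rpow_one] at h1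
    exact h1
  have hid : ((n - k' : ℕ) : ℝ) * ((n.choose k' : ℕ) : ℝ)
      = ((k'+1 : ℕ) : ℝ) * ((n.choose (k'+1) : ℕ) : ℝ) := by
    have h := Nat.choose_succ_right_eq n k'
    have h2 := congrArg (Nat.cast (R := ℝ)) h
    push_cast at h2 ⊢
    linear_combination -h2
  have hek1 : 0 < esym k' lam := by
    have h3 : esym k' lam = p k' * ((n.choose k' : ℕ) : ℝ) := by
      rw [hp]
      field_simp
    rw [h3]
    exact mul_pos hpk hCK1
  have hpk1eq : p (k'+1) = esym (k'+1) lam / ((n.choose (k'+1) : ℕ) : ℝ) := by rw [hp]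
  have hpkeq : p k' = esym k' lam / ((n.choose k' : ℕ) : ℝ) := by rw [hp]
  have hub : ((k'+1 : ℕ) : ℝ) * ((n.choose (k'+1) : ℕ) : ℝ)
        * (esym (k'+1) lam / ((n.choose (k'+1) : ℕ) : ℝ)) ^ ((k' : ℝ) * r)
      ≤ ((n - k' : ℕ) : ℝ) * esym k' lam := by
    calc ((k'+1 : ℕ) : ℝ) * ((n.choose (k'+1) : ℕ) : ℝ)
          * (esym (k'+1) lam / ((n.choose (k'+1) : ℕ) : ℝ)) ^ ((k' : ℝ) * r)
        ≤ ((k'+1 : ℕ) : ℝ) * ((n.choose (k'+1) : ℕ) : ℝ)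
          * (esym k' lam / ((n.choose k' : ℕ) : ℝ)) := by
          refine mul_le_mul_of_nonneg_left ?_ (by positivity)
          rw [← hpk1eq, ← hpkeq]
          exact hMac
      _ = ((n - k' : ℕ) : ℝ) * ((n.choose k' : ℕ) : ℝ)
          * (esym k' lam / ((n.choose k' : ℕ) : ℝ)) := by rw [← hid]
      _ = ((n - k' : ℕ) : ℝ) * esym k' lam := by
          field_simp
  have hkey : r * esym (k'+1) lam ^ (r-1) * (((k'+1 : ℕ) : ℝ) * ((n.choose (k'+1) : ℕ) : ℝ)
        * (esym (k'+1) lam / ((n.choose (k'+1) : ℕ) : ℝ)) ^ ((k' : ℝ) * r))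
      = ((n.choose (k'+1) : ℕ) : ℝ) ^ r := by
    have e0 : r - 1 + (k' : ℝ) * r = 0 := by
      push_cast at hr1
      linear_combination hr1
    have e0' : r + (k' : ℝ) * r = 1 := by
      push_cast at hr1
      linear_combination hr1
    have h1 : esym (k'+1) lam ^ (r-1) * esym (k'+1) lam ^ ((k' : ℝ) * r) = 1 := by
      rw [← Real.rpow_add hek, e0, Real.rpow_zero]
    have h2 : ((n.choose (k'+1) : ℕ) : ℝ) ^ r * ((n.choose (k'+1) : ℕ) : ℝ) ^ ((k' : ℝ) * r)
        = ((n.choose (k'+1) : ℕ) : ℝ) := by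
      rw [← Real.rpow_add hCK, e0', Real.rpow_one]
    rw [Real.div_rpow hek.le hCK.le]
    have hCKe : (0:ℝ) < ((n.choose (k'+1) : ℕ) : ℝ) ^ ((k' : ℝ) * r) :=
      Real.rpow_pos_of_pos hCK _
    have step : r * esym (k'+1) lam ^ (r-1) * (((k'+1 : ℕ) : ℝ) * ((n.choose (k'+1) : ℕ) : ℝ)
          * (esym (k'+1) lam ^ ((k' : ℝ) * r) / ((n.choose (k'+1) : ℕ) : ℝ) ^ ((k' : ℝ) * r)))
        = (((k'+1 : ℕ) : ℝ) * r) * (esym (k'+1) lam ^ (r-1) * esym (k'+1) lam ^ ((k' : ℝ) * r))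
          * (((n.choose (k'+1) : ℕ) : ℝ) / ((n.choose (k'+1) : ℕ) : ℝ) ^ ((k' : ℝ) * r)) := by
      ring
    rw [step, hr1, h1, one_mul, one_mul, div_eq_iff hCKe.ne']
    exact h2.symm
  calc ((n.choose (k'+1) : ℕ) : ℝ) ^ r
      = r * esym (k'+1) lam ^ (r-1) * (((k'+1 : ℕ) : ℝ) * ((n.choose (k'+1) : ℕ) : ℝ)
        * (esym (k'+1) lam / ((n.choose (k'+1) : ℕ) : ℝ)) ^ ((k' : ℝ) * r)) := hkey.symm
    _ ≤ r * esym (k'+1) lam ^ (r-1) * (((n - k' : ℕ) : ℝ) * esym k' lam) := by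
        refine mul_le_mul_of_nonneg_left hub ?_
        have := Real.rpow_pos_of_pos hek (r-1)
        positivity
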